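/- For every s > −1, the closure in ℝ of the set { Δ_s(X)/E[X] : X an integrable real random variable with X > 0 almost surely and E[X] > 0 } equals the interval [0, 1], where Δ_s(X) = (1/s) ∫_0^∞ F_X(x)(1 − F_X(x)^s) dx (and Δ_0(X) = −∫_0^∞ F_X log F_X dx). In particular 0 ≤ Δ_s(X) ≤ E[X] for every such X. -/

import Mathlib

open MeasureTheory Set Filter
open scoped ENNReal

/-- The integrand `t ↦ (1/s) t (1 − t^s)` of the cumulative Tsallis entropy, with the
convention `(1 − t^0)/0 = −log t` at `s = 0`. -/
noncomputable def tsallisFn (s t : ℝ) : ℝ :=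
  if s = 0 then -(t * Real.log t) else (1 / s) * (t * (1 - t ^ s))


lemma tsallisFn_nonneg {s t : ℝ} (hs : -1 < s) (ht0 : 0 ≤ t) (ht1 : t ≤ 1) :
    0 ≤ tsallisFn s t := by
  unfold tsallisFn
  split_ifs with h0
  · have := Real.log_nonpos ht0 ht1
    nlinarith
  · rcases lt_or_gt_of_ne h0 with hneg | hpos
    · rcases eq_or_lt_of_le ht0 with rfl | ht0'
      · simp [Real.zero_rpow h0]
      · have h1 : 1 ≤ t ^ s := Real.one_le_rpow_of_pos_of_le_one_of_nonpos ht0' ht1 hneg.le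
        have : t * (1 - t ^ s) ≤ 0 := mul_nonpos_of_nonneg_of_nonpos ht0 (by linarith)
        have h2 : 1 / s < 0 := div_neg_of_pos_of_neg one_pos hneg
        nlinarith
    · have h1 : t ^ s ≤ 1 := Real.rpow_le_one ht0 ht1 hpos.le
      have : 0 ≤ t * (1 - t ^ s) := mul_nonneg ht0 (by linarith)
      positivity

lemma tsallisFn_le {s t : ℝ} (hs : -1 < s) (ht0 : 0 ≤ t) (ht1 : t ≤ 1) :
    tsallisFn s t ≤ 1 - t := by
  unfold tsallisFn
  split_ifs with h0
  · rcases eq_or_lt_of_le ht0 with rfl | ht0'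
    · simp
    · have h1 : Real.log (1/t) ≤ 1/t - 1 := Real.log_le_sub_one_of_pos (by positivity)
      rw [Real.log_div one_ne_zero ht0'.ne', Real.log_one] at h1
      have h2 : t * (0 - Real.log t) ≤ t * (1/t - 1) := by
        apply mul_le_mul_of_nonneg_left _ ht0
        linarith
      have h3 : t * (1/t) = 1 := mul_one_div_cancel ht0'.ne'
      nlinarith [mul_sub t (1/t) 1]
  · have heq : 1 / s * (t * (1 - t ^ s)) = (t - t ^ (1 + s)) / s := by
      rw [Real.rpow_add' ht0 (by linarith), Real.rpow_one]
      field_simp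
    rw [heq]
    have hx : -1 ≤ t - 1 := by linarith
    have hrw : 1 + (t - 1) = t := by ring
    rcases lt_or_gt_of_ne h0 with hneg | hpos
    · have hb := rpow_one_add_le_one_add_mul_self hx (p := 1 + s) (by linarith) (by linarith)
      rw [hrw] at hb
      rw [div_le_iff_of_neg hneg]
      nlinarith
    · have hb := one_add_mul_self_le_rpow_one_add hx (p := 1 + s) (by linarith)
      rw [hrw] at hb
      rw [div_le_iff₀ hpos]
      nlinarith

lemma tsallisFn_zero (s : ℝ) : tsallisFn s 0 = 0 := by simp [tsallisFn]

lemma tsallisFn_one (s : ℝ) : tsallisFn s 1 = 0 := by simp [tsallisFn, Real.one_rpow]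

lemma tsallisFn_hasDerivAt (s : ℝ) (h0 : s ≠ 0) :
    HasDerivAt (tsallisFn s) (-1) 1 := by
  have hfun : tsallisFn s = fun t => (1 / s) * (t * (1 - t ^ s)) := by
    funext t; simp [tsallisFn, h0]
  rw [hfun]
  have h1 : HasDerivAt (fun t : ℝ => t ^ s) (s * (1:ℝ) ^ (s - 1)) 1 :=
    Real.hasDerivAt_rpow_const (Or.inl one_ne_zero)
  have h2 : HasDerivAt (fun t : ℝ => 1 - t ^ s) (-(s * (1:ℝ) ^ (s - 1))) 1 :=
    (h1.const_sub 1)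
  have h3 : HasDerivAt (fun t : ℝ => t * (1 - t ^ s))
      (1 * (1 - (1:ℝ) ^ s) + 1 * -(s * (1:ℝ) ^ (s - 1))) 1 :=
    (hasDerivAt_id 1).mul h2
  have h4 := h3.const_mul (1 / s)
  have h5 : (1 / s * (1 * (1 - (1:ℝ) ^ s) + 1 * -(s * (1:ℝ) ^ (s - 1)))) = -1 := by
    rw [Real.one_rpow, Real.one_rpow]
    field_simp
    ring
  rw [h5] at h4
  exact h4

lemma tsallisFn_hasDerivAt_zero : HasDerivAt (tsallisFn 0) (-1) 1 := by
  have hfun : tsallisFn 0 = fun t => -(t * Real.log t) := by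
    funext t; simp [tsallisFn]
  rw [hfun]
  have h1 : HasDerivAt (fun t : ℝ => t * Real.log t) (Real.log 1 + 1) 1 :=
    Real.hasDerivAt_mul_log one_ne_zero
  have := h1.neg
  rw [Real.log_one, zero_add] at this
  exact this

lemma tsallisFn_ratio_tendsto (s : ℝ) :
    Tendsto (fun p : ℝ => tsallisFn s (1 - p) / p) (nhdsWithin 0 (Ioi 0)) (nhds 1) := by
  have hderiv : HasDerivAt (tsallisFn s) (-1) 1 := by
    by_cases h0 : s = 0
    · subst h0; exact tsallisFn_hasDerivAt_zero
    · exact tsallisFn_hasDerivAt s h0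
  have hslope := hasDerivAt_iff_tendsto_slope.mp hderiv
  have hmap : Tendsto (fun p : ℝ => 1 - p) (nhdsWithin 0 (Ioi 0)) (nhdsWithin 1 {1}ᶜ) := by
    apply tendsto_nhdsWithin_of_tendsto_nhds_of_eventually_within
    · have hc : Continuous (fun p : ℝ => 1 - p) := by continuity
      have h : Tendsto (fun p : ℝ => 1 - p) (nhdsWithin 0 (Ioi 0)) (nhds (1 - 0)) :=
        (hc.tendsto 0).mono_left nhdsWithin_le_nhds
      simpa using h
    · filter_upwards [self_mem_nhdsWithin] with p hp
      simp only [mem_compl_iff, mem_singleton_iff]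
      intro h
      have hp0 : (0:ℝ) < p := hp
      linarith
  have hcomp := hslope.comp hmap
  have heq : ∀ p ∈ Ioi (0:ℝ), (slope (tsallisFn s) 1 ∘ fun p => 1 - p) p
      = -(tsallisFn s (1 - p) / p) := by
    intro p hp
    simp only [Function.comp_apply, slope_def_field]
    have h1 : tsallisFn s 1 = 0 := tsallisFn_one s
    rw [h1]
    have : (1 : ℝ) - p - 1 = -p := by ring
    rw [sub_zero, this, div_neg]
  have hcomp' : Tendsto (fun p : ℝ => -(tsallisFn s (1 - p) / p))
      (nhdsWithin 0 (Ioi 0)) (nhds (-1)) := by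
    apply hcomp.congr'
    filter_upwards [self_mem_nhdsWithin] with p hp using (heq p hp)
  have := hcomp'.neg
  simpa using this

lemma cdf_toReal_le_one (μ : Measure ℝ) [IsProbabilityMeasure μ] (x : ℝ) :
    (μ (Iic x)).toReal ≤ 1 := by
  have h : μ (Iic x) ≤ 1 := prob_le_one
  calc (μ (Iic x)).toReal ≤ (1 : ℝ≥0∞).toReal := ENNReal.toReal_mono ENNReal.one_ne_top h
    _ = 1 := ENNReal.toReal_one

lemma layercake_aux (μ : Measure ℝ) [IsProbabilityMeasure μ]
    (hi : Integrable (id : ℝ → ℝ) μ) (h0 : μ (Iic 0) = 0) :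
    IntegrableOn (fun x => 1 - (μ (Iic x)).toReal) (Ioi 0) volume ∧
    ∫ x, x ∂μ = ∫ x in Ioi (0:ℝ), (1 - (μ (Iic x)).toReal) := by
  have f_nn : 0 ≤ᵐ[μ] (id : ℝ → ℝ) := by
    rw [Filter.EventuallyLE, ae_iff]
    apply measure_mono_null _ h0
    intro x hx
    simp only [mem_setOf_eq, Pi.zero_apply, id_eq, not_le] at hx
    exact le_of_lt hx
  have heq : ∀ t : ℝ, (μ {a : ℝ | t < a}).toReal = 1 - (μ (Iic t)).toReal := by
    intro t
    have h1 : {a : ℝ | t < a} = (Iic t)ᶜ := by ext a; simp [not_le]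
    rw [h1, prob_compl_eq_one_sub measurableSet_Iic,
      ENNReal.toReal_sub_of_le prob_le_one ENNReal.one_ne_top, ENNReal.toReal_one]
  have hmono : Monotone (fun x : ℝ => (μ (Iic x)).toReal) := by
    intro a b hab
    exact ENNReal.toReal_mono (measure_ne_top μ _) (measure_mono (Iic_subset_Iic.mpr hab))
  have hmeas : Measurable (fun x : ℝ => 1 - (μ (Iic x)).toReal) :=
    measurable_const.sub hmono.measurable
  have hlint := MeasureTheory.lintegral_eq_lintegral_meas_lt μ f_nn hi.aemeasurable
  have hlt : ∫⁻ ω, ENNReal.ofReal (id ω) ∂μ < ⊤ := hi.lintegral_lt_top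
  constructor
  · refine ⟨hmeas.aestronglyMeasurable, ?_⟩
    rw [hasFiniteIntegral_iff_norm]
    have hcong : ∫⁻ t in Ioi (0:ℝ), ENNReal.ofReal ‖1 - (μ (Iic t)).toReal‖
        = ∫⁻ t in Ioi (0:ℝ), μ {a : ℝ | t < id a} := by
      apply setLIntegral_congr_fun measurableSet_Ioi
      intro t ht
      have hnn : 0 ≤ 1 - (μ (Iic t)).toReal := by linarith [cdf_toReal_le_one μ t]
      show ENNReal.ofReal ‖1 - (μ (Iic t)).toReal‖ = μ {a : ℝ | t < id a}
      rw [Real.norm_of_nonneg hnn, ← heq t]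
      simp only [id_eq]
      exact ENNReal.ofReal_toReal (measure_ne_top μ _)
    rw [hcong, ← hlint]
    exact hlt
  · have hkey := hi.integral_eq_integral_meas_lt f_nn
    simp only [id_eq] at hkey
    rw [hkey]
    apply setIntegral_congr_fun measurableSet_Ioi
    intro t ht
    simpa [measureReal_def] using heq t

noncomputable def twoPt (p b : ℝ) : Measure ℝ :=
  ENNReal.ofReal (1 - p) • Measure.dirac 1 + ENNReal.ofReal p • Measure.dirac b

lemma twoPt_apply (p b : ℝ) (t : Set ℝ) :
    twoPt p b t = ENNReal.ofReal (1 - p) * (t.indicator 1 1)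
      + ENNReal.ofReal p * (t.indicator 1 b) := by
  simp [twoPt, Measure.dirac_apply]

lemma twoPt_prob (p b : ℝ) (hp0 : 0 ≤ p) (hp1 : p ≤ 1) :
    IsProbabilityMeasure (twoPt p b) := by
  constructor
  rw [twoPt_apply p b univ]
  simp only [indicator_univ, Pi.one_apply, mul_one]
  rw [← ENNReal.ofReal_add (by linarith) hp0]
  norm_num

lemma dirac_integrable (a : ℝ) : Integrable (id : ℝ → ℝ) (Measure.dirac a) := by
  constructor
  · exact measurable_id.aestronglyMeasurable
  · rw [hasFiniteIntegral_iff_norm, lintegral_dirac]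
    simp

lemma twoPt_integrable (p b : ℝ) : Integrable (id : ℝ → ℝ) (twoPt p b) := by
  unfold twoPt
  exact ((dirac_integrable 1).smul_measure ENNReal.ofReal_ne_top).add_measure
    ((dirac_integrable b).smul_measure ENNReal.ofReal_ne_top)

lemma twoPt_Iic_zero (p b : ℝ) (hb : 1 ≤ b) :
    twoPt p b (Iic 0) = 0 := by
  rw [twoPt_apply p b _]
  rw [indicator_of_notMem (by simp : (1:ℝ) ∉ Iic 0),
    indicator_of_notMem (by simp; linarith : b ∉ Iic 0)]
  simp

lemma twoPt_integral (p b : ℝ) (hp0 : 0 ≤ p) (hp1 : p ≤ 1) :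
    ∫ x, x ∂(twoPt p b) = (1 - p) * 1 + p * b := by
  unfold twoPt
  show ∫ x, id x ∂_ = _
  rw [integral_add_measure (((dirac_integrable 1).smul_measure ENNReal.ofReal_ne_top))
    (((dirac_integrable b).smul_measure ENNReal.ofReal_ne_top))]
  rw [integral_smul_measure, integral_smul_measure]
  have h1 : ∫ x, id x ∂(Measure.dirac (1:ℝ)) = 1 := by
    simpa using integral_dirac (id : ℝ → ℝ) (1:ℝ)
  have h2 : ∫ x, id x ∂(Measure.dirac b) = b := by
    simpa using integral_dirac (id : ℝ → ℝ) b
  rw [h1, h2, ENNReal.toReal_ofReal (by linarith), ENNReal.toReal_ofReal hp0]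
  simp [smul_eq_mul]

lemma twoPt_entropy (s p b : ℝ) (hp0 : 0 ≤ p) (hp1 : p ≤ 1) (hb : 1 ≤ b) :
    ∫ x in Ioi (0:ℝ), tsallisFn s ((twoPt p b (Iic x)).toReal)
      = (b - 1) * tsallisFn s (1 - p) := by
  have hind : ∀ x ∈ Ioi (0:ℝ), tsallisFn s ((twoPt p b (Iic x)).toReal)
      = (Ico (1:ℝ) b).indicator (fun _ => tsallisFn s (1 - p)) x := by
    intro x hx
    rcases lt_or_ge x 1 with h1 | h1
    · have hF : twoPt p b (Iic x) = 0 := by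
        rw [twoPt_apply]
        rw [indicator_of_notMem (by simpa using h1),
          indicator_of_notMem (by simp; linarith)]
        simp
      rw [hF, indicator_of_notMem (by simp [not_le.mpr h1] : x ∉ Ico (1:ℝ) b)]
      simpa using tsallisFn_zero s
    · rcases lt_or_ge x b with h2 | h2
      · have hF : twoPt p b (Iic x) = ENNReal.ofReal (1 - p) := by
          rw [twoPt_apply]
          rw [indicator_of_mem (by simpa using h1), indicator_of_notMem (by simpa using h2)]
          simp
        rw [hF, ENNReal.toReal_ofReal (by linarith),
          indicator_of_mem (by exact ⟨h1, h2⟩ : x ∈ Ico (1:ℝ) b)]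
      · have hF : twoPt p b (Iic x) = 1 := by
          rw [twoPt_apply]
          rw [indicator_of_mem (by simp; linarith), indicator_of_mem (by simpa using h2)]
          simp only [Pi.one_apply, mul_one]
          rw [← ENNReal.ofReal_add (by linarith) hp0]
          norm_num
        rw [hF, indicator_of_notMem (by simp [not_lt.mpr h2] : x ∉ Ico (1:ℝ) b)]
        simpa using tsallisFn_one s
  rw [setIntegral_congr_fun measurableSet_Ioi hind]
  rw [setIntegral_indicator measurableSet_Ico]
  have : Ioi (0:ℝ) ∩ Ico 1 b = Ico 1 b := by
    apply inter_eq_self_of_subset_right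
    intro x hx
    simp only [mem_Ioi]
    linarith [hx.1]
  rw [this, setIntegral_const, Real.volume_real_Ico_of_le hb, smul_eq_mul]

/-- **Proposition Posa.** For every `s > −1`, the closure of the set of
ratios `Δ_s(X)/E[X]` over integrable a.s. positive random variables `X` (identified with
their laws, probability measures `μ` on `ℝ`) equals `[0,1]`; in particular
`0 ≤ Δ_s(X) ≤ E[X]` for every such `X`. -/
theorem tsallis_range_positive (s : ℝ) (hs : -1 < s) :
    closure {r : ℝ | ∃ μ : Measure ℝ, IsProbabilityMeasure μ ∧
        Integrable (id : ℝ → ℝ) μ ∧ μ (Iic 0) = 0 ∧ 0 < ∫ x, x ∂μ ∧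
        r = (∫ x in Ioi (0 : ℝ), tsallisFn s ((μ (Iic x)).toReal)) / ∫ x, x ∂μ}
      = Icc (0 : ℝ) 1
    ∧ ∀ μ : Measure ℝ, IsProbabilityMeasure μ → Integrable (id : ℝ → ℝ) μ →
        μ (Iic 0) = 0 → 0 < ∫ x, x ∂μ →
        0 ≤ (∫ x in Ioi (0 : ℝ), tsallisFn s ((μ (Iic x)).toReal))
        ∧ (∫ x in Ioi (0 : ℝ), tsallisFn s ((μ (Iic x)).toReal)) ≤ ∫ x, x ∂μ := by
  
  -- the pointwise bounds (second part), proved first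
  have key : ∀ μ : Measure ℝ, IsProbabilityMeasure μ → Integrable (id : ℝ → ℝ) μ →
      μ (Iic 0) = 0 → 0 < ∫ x, x ∂μ →
      0 ≤ (∫ x in Ioi (0 : ℝ), tsallisFn s ((μ (Iic x)).toReal))
      ∧ (∫ x in Ioi (0 : ℝ), tsallisFn s ((μ (Iic x)).toReal)) ≤ ∫ x, x ∂μ := by
    intro μ hprob hint h0 hE
    haveI := hprob
    obtain ⟨hInt, hEq⟩ := layercake_aux μ hint h0
    constructor
    · apply setIntegral_nonneg measurableSet_Ioi
      intro x hx
      exact tsallisFn_nonneg hs ENNReal.toReal_nonneg (cdf_toReal_le_one μ x)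
    · rw [hEq]
      apply integral_mono_of_nonneg
      · exact Filter.Eventually.of_forall
          (fun x => tsallisFn_nonneg hs ENNReal.toReal_nonneg (cdf_toReal_le_one μ x))
      · exact hInt
      · exact Filter.Eventually.of_forall
          (fun x => tsallisFn_le hs ENNReal.toReal_nonneg (cdf_toReal_le_one μ x))
  refine ⟨?_, key⟩
  apply Subset.antisymm
  · -- closure S ⊆ Icc 0 1
    apply closure_minimal _ isClosed_Icc
    rintro r ⟨μ, hprob, hint, h0, hE, rfl⟩
    obtain ⟨hge, hle⟩ := key μ hprob hint h0 hE
    exact ⟨div_nonneg hge hE.le, (div_le_one hE).mpr hle⟩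
  · -- Icc 0 1 ⊆ closure S, via Ico 0 1 ⊆ S
    have hsub : Ico (0:ℝ) 1 ⊆ {r : ℝ | ∃ μ : Measure ℝ, IsProbabilityMeasure μ ∧
        Integrable (id : ℝ → ℝ) μ ∧ μ (Iic 0) = 0 ∧ 0 < ∫ x, x ∂μ ∧
        r = (∫ x in Ioi (0 : ℝ), tsallisFn s ((μ (Iic x)).toReal)) / ∫ x, x ∂μ} := by
      rintro q ⟨hq0, hq1⟩
      -- choose p with q < tsallisFn s (1-p)/p and 0 < p < 1
      have hev : ∀ᶠ p in nhdsWithin 0 (Ioi 0), q < tsallisFn s (1 - p) / p :=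
        (tsallisFn_ratio_tendsto s).eventually (eventually_gt_nhds hq1)
      have hmem : Ioo (0:ℝ) 1 ∈ nhdsWithin 0 (Ioi 0) :=
        Ioo_mem_nhdsGT_of_mem (by constructor <;> norm_num)
      obtain ⟨p, hqp, hp01⟩ :=
        (hev.and (eventually_of_mem hmem (fun x hx => hx))).exists
      set c := tsallisFn s (1 - p) with hc
      have hc0 : 0 ≤ c := tsallisFn_nonneg hs (by linarith [hp01.2]) (by linarith [hp01.1])
      have hcq : q * p < c := by
        have := (lt_div_iff₀ hp01.1).mp hqp
        linarith
      set T := max 1 ((c + q * (1 - p)) / (c - q * p)) with hT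
      have hT1 : 1 ≤ T := le_max_left _ _
      have hden : ∀ b : ℝ, 1 ≤ b → 0 < (1 - p) * 1 + p * b := by
        intro b hb
        nlinarith [hp01.1, hp01.2]
      set φ : ℝ → ℝ := fun b => ((b - 1) * c) / ((1 - p) * 1 + p * b) with hφ
      have hcont : ContinuousOn φ (Icc 1 T) := by
        apply ContinuousOn.div
        · fun_prop
        · fun_prop
        · intro b hb
          exact (hden b hb.1).ne'
      have hφ1 : φ 1 = 0 := by simp [hφ]
      have hφT : q ≤ φ T := by
        have h1 : (c + q * (1 - p)) / (c - q * p) ≤ T := le_max_right _ _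
        have h2 : c + q * (1 - p) ≤ T * (c - q * p) :=
          (div_le_iff₀ (by linarith)).mp h1
        rw [hφ, le_div_iff₀ (hden T hT1)]
        nlinarith
      have hIVT := intermediate_value_Icc hT1 hcont
      have hqmem : q ∈ Icc (φ 1) (φ T) := ⟨by rw [hφ1]; exact hq0, hφT⟩
      obtain ⟨b, hbmem, hφb⟩ := hIVT hqmem
      have hb1 : 1 ≤ b := hbmem.1
      refine ⟨twoPt p b, twoPt_prob p b hp01.1.le hp01.2.le, twoPt_integrable p b,
        twoPt_Iic_zero p b hb1, ?_, ?_⟩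
      · rw [twoPt_integral p b hp01.1.le hp01.2.le]
        exact hden b hb1
      · rw [twoPt_entropy s p b hp01.1.le hp01.2.le hb1,
          twoPt_integral p b hp01.1.le hp01.2.le]
        rw [← hφb]
    calc Icc (0:ℝ) 1 = closure (Ico (0:ℝ) 1) := (closure_Ico zero_ne_one).symm
      _ ⊆ _ := closure_mono hsub
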